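/- arXiv:2506.11707 — 3 statements merged into one kernel-verified Lean document; each statement's English description precedes it below -/
import Mathlib

section
/- Let A and B be bounded self-adjoint operators on a separable complex Hilbert space, and let ‖·‖ denote the operator norm. Then for every t ≥ 0, ‖[e^{itA}, B]‖ ≤ t · ‖[A,B]‖. -/
open scoped InnerProductSpace

/-- For bounded self-adjoint operators `A`, `B` on a separable complex Hilbert
space and `t ≥ 0`, `‖[e^{itA}, B]‖ ≤ t · ‖[A,B]‖`. -/
theorem commutator_exp_norm_le {H : Type*} [NormedAddCommGroup H] [InnerProductSpace ℂ H]
    [CompleteSpace H] [TopologicalSpace.SeparableSpace H]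
    (A B : H →L[ℂ] H) (hA : IsSelfAdjoint A) (hB : IsSelfAdjoint B)
    (t : ℝ) (ht : 0 ≤ t) :
    ‖NormedSpace.exp ((t : ℂ) • (Complex.I • A)) * B
      - B * NormedSpace.exp ((t : ℂ) • (Complex.I • A))‖ ≤ t * ‖A * B - B * A‖ := by
  rcases subsingleton_or_nontrivial H with hH | hH
  · have : Subsingleton (H →L[ℂ] H) := ⟨fun f g => ContinuousLinearMap.ext fun x =>
      Subsingleton.elim _ _⟩
    simp [Subsingleton.elim (NormedSpace.exp ((t : ℂ) • (Complex.I • A)) * B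
      - B * NormedSpace.exp ((t : ℂ) • (Complex.I • A))) 0,
      Subsingleton.elim (A * B - B * A) 0]
  set J : H →L[ℂ] H := Complex.I • A with hJ
  set E : ℝ → (H →L[ℂ] H) := fun s => NormedSpace.exp (s • J) with hE
  -- derivative of E
  have hU : ∀ s : ℝ, HasDerivAt E (E s * J) s := by
    intro s
    have := hasDerivAt_exp_smul_const (𝕂 := ℝ) J s
    exact this
  -- E s is unitary
  have hunit : ∀ s : ℝ, E s ∈ unitary (H →L[ℂ] H) := by
    intro s
    let +nondep : NormedAlgebra ℚ (H →L[ℂ] H) := .restrictScalars ℚ ℂ _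
    apply NormedSpace.exp_mem_unitary_of_mem_skewAdjoint
    rw [skewAdjoint.mem_iff, hJ, star_smul, star_smul, hA.star_eq, star_trivial,
      Complex.star_def, Complex.conj_I, neg_smul, smul_neg]
  have hnorm : ∀ s : ℝ, ‖E s‖ = 1 := fun s => CStarRing.norm_of_mem_unitary (hunit s)
  set f : ℝ → (H →L[ℂ] H) := fun s => E s * B * E (t - s) with hf
  set C : ℝ := ‖A * B - B * A‖ with hC
  have hcomm : ∀ s : ℝ, Commute J (E s) := fun s =>
    ((Commute.refl J).smul_right s).exp_right
  have hJB : J * B - B * J = Complex.I • (A * B - B * A) := by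
    simp [hJ, smul_mul_assoc, mul_smul_comm, smul_sub]
  have hderiv : ∀ s : ℝ, HasDerivAt f (E s * (J * B - B * J) * E (t - s)) s := by
    intro s
    have h1 : HasDerivAt (fun u => E u * B) (E s * J * B) s := (hU s).mul_const B
    have h2 : HasDerivAt (fun u : ℝ => E (t - u)) ((-1 : ℝ) • (E (t - s) * J)) s :=
      (hU (t - s)).scomp s ((hasDerivAt_id s).const_sub t)
    have h3 := h1.mul h2
    refine h3.congr_deriv ?_
    have hc := (hcomm (t - s)).eq
    rw [neg_one_smul, mul_neg, ← hc]
    noncomm_ring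
  have hbound : ∀ s : ℝ, ‖E s * (J * B - B * J) * E (t - s)‖ ≤ C := by
    intro s
    calc ‖E s * (J * B - B * J) * E (t - s)‖
        ≤ ‖E s * (J * B - B * J)‖ * ‖E (t - s)‖ := norm_mul_le _ _
      _ ≤ ‖E s‖ * ‖J * B - B * J‖ * ‖E (t - s)‖ := by
          gcongr; exact norm_mul_le _ _
      _ = ‖J * B - B * J‖ := by rw [hnorm, hnorm, one_mul, mul_one]
      _ = C := by rw [hJB, norm_smul, Complex.norm_I, one_mul, hC]
  have key : ‖f t - f 0‖ ≤ C * ‖t - 0‖ :=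
    convex_univ.norm_image_sub_le_of_norm_hasDerivWithin_le
      (fun x _ => (hderiv x).hasDerivWithinAt) (fun x _ => hbound x)
      (Set.mem_univ 0) (Set.mem_univ t)
  have hE0 : E 0 = 1 := by simp [hE, NormedSpace.exp_zero]
  have hft : f t = E t * B := by simp [hf, hE0]
  have hf0 : f 0 = B * E t := by simp [hf, hE0]
  have hEt : E t = NormedSpace.exp ((t : ℂ) • (Complex.I • A)) := by
    have h : (t : ℂ) • (Complex.I • A) = t • J := by
      rw [hJ, ← IsScalarTower.algebraMap_smul ℂ t (Complex.I • A)]; rfl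
    rw [h]
  rw [hft, hf0, hEt] at key
  calc ‖_‖ ≤ C * ‖t - 0‖ := key
    _ = t * ‖A * B - B * A‖ := by
        rw [sub_zero, Real.norm_of_nonneg ht, mul_comm, hC]
end

section
/- Let A, B be bounded self-adjoint operators on a separable Hilbert space and Δ a trace-class operator. Suppose ‖[A,B]‖ ≤ ε, ‖Δ‖_tr ≤ C, and ‖Δ(A−B)‖_tr ≤ ε. Then for every t ≥ 0, ‖Δ(e^{itA} − e^{itB})‖_tr ≤ ε t (1 + (C/2) t). -/
set_option maxHeartbeats 1000000


open scoped InnerProductSpace ENNReal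

/-- The trace norm (Schatten-1 norm) of an operator, defined through its classical
variational characterization: `‖T‖₁ = sup ∑ᵢ |⟪eᵢ, T fᵢ⟫|` over finite orthonormal
families `(eᵢ)`, `(fᵢ)`.  It takes the value `∞` iff `T` is not trace class. -/
noncomputable def traceNorm {H : Type*} [NormedAddCommGroup H] [InnerProductSpace ℂ H]
    (T : H →L[ℂ] H) : ℝ≥0∞ :=
  ⨆ (n : ℕ) (e : Fin n → H) (f : Fin n → H) (_ : Orthonormal ℂ e) (_ : Orthonormal ℂ f),
    ENNReal.ofReal (∑ i, ‖⟪e i, T (f i)⟫_ℂ‖)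

section Aux

variable {H : Type*} [NormedAddCommGroup H] [InnerProductSpace ℂ H]

lemma traceNorm_term_le (T : H →L[ℂ] H) {n : ℕ} (e f : Fin n → H)
    (he : Orthonormal ℂ e) (hf : Orthonormal ℂ f) :
    ENNReal.ofReal (∑ i, ‖⟪e i, T (f i)⟫_ℂ‖) ≤ traceNorm T :=
  le_iSup_of_le n <| le_iSup_of_le e <| le_iSup_of_le f <|
    le_iSup_of_le he <| le_iSup_of_le hf le_rfl

lemma traceNorm_le_of_forall {T : H →L[ℂ] H} {c : ℝ≥0∞}
    (h : ∀ (n : ℕ) (e f : Fin n → H), Orthonormal ℂ e → Orthonormal ℂ f →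
      ENNReal.ofReal (∑ i, ‖⟪e i, T (f i)⟫_ℂ‖) ≤ c) : traceNorm T ≤ c :=
  iSup_le fun n => iSup_le fun e => iSup_le fun f => iSup_le fun he => iSup_le fun hf =>
    h n e f he hf

variable [CompleteSpace H]

lemma traceNorm_mul_unitary_le (T U : H →L[ℂ] H) (hU : star U * U = 1) :
    traceNorm (T * U) ≤ traceNorm T := by
  refine traceNorm_le_of_forall fun n e f he hf => ?_
  have hUf : Orthonormal ℂ (fun i => U (f i)) := by
    rw [orthonormal_iff_ite] at hf ⊢
    intro i j
    have h1 : ⟪U (f i), U (f j)⟫_ℂ = ⟪f i, (ContinuousLinearMap.adjoint U) (U (f j))⟫_ℂ :=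
      (ContinuousLinearMap.adjoint_inner_right U _ _).symm
    have h2 : (ContinuousLinearMap.adjoint U) (U (f j)) = f j := by
      have := congrArg (fun V : H →L[ℂ] H => V (f j)) hU
      simpa [ContinuousLinearMap.star_eq_adjoint, ContinuousLinearMap.mul_apply] using this
    rw [h1, h2]; exact hf i j
  have : ∀ i, ⟪e i, (T * U) (f i)⟫_ℂ = ⟪e i, T (U (f i))⟫_ℂ := fun i => by
    simp [ContinuousLinearMap.mul_apply]
  simp only [this]
  exact traceNorm_term_le T e (fun i => U (f i)) he hUf

lemma traceNorm_add_le (S T : H →L[ℂ] H) :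
    traceNorm (S + T) ≤ traceNorm S + traceNorm T := by
  refine traceNorm_le_of_forall fun n e f he hf => ?_
  have h1 : ∑ i, ‖⟪e i, (S + T) (f i)⟫_ℂ‖ ≤
      (∑ i, ‖⟪e i, S (f i)⟫_ℂ‖) + (∑ i, ‖⟪e i, T (f i)⟫_ℂ‖) := by
    rw [← Finset.sum_add_distrib]
    refine Finset.sum_le_sum fun i _ => ?_
    simp only [ContinuousLinearMap.add_apply, inner_add_right]
    exact norm_add_le _ _
  calc ENNReal.ofReal (∑ i, ‖⟪e i, (S + T) (f i)⟫_ℂ‖)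
      ≤ ENNReal.ofReal ((∑ i, ‖⟪e i, S (f i)⟫_ℂ‖) + (∑ i, ‖⟪e i, T (f i)⟫_ℂ‖)) :=
        ENNReal.ofReal_le_ofReal h1
    _ ≤ ENNReal.ofReal (∑ i, ‖⟪e i, S (f i)⟫_ℂ‖) + ENNReal.ofReal (∑ i, ‖⟪e i, T (f i)⟫_ℂ‖) :=
        ENNReal.ofReal_add_le
    _ ≤ traceNorm S + traceNorm T :=
        add_le_add (traceNorm_term_le S e f he hf) (traceNorm_term_le T e f he hf)

lemma traceNorm_smul_le (c : ℂ) (T : H →L[ℂ] H) :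
    traceNorm (c • T) ≤ ENNReal.ofReal ‖c‖ * traceNorm T := by
  refine traceNorm_le_of_forall fun n e f he hf => ?_
  have h1 : ∑ i, ‖⟪e i, (c • T) (f i)⟫_ℂ‖ = ‖c‖ * ∑ i, ‖⟪e i, T (f i)⟫_ℂ‖ := by
    rw [Finset.mul_sum]
    refine Finset.sum_congr rfl fun i _ => ?_
    simp [ContinuousLinearMap.smul_apply, inner_smul_right, norm_mul]
  rw [h1, ENNReal.ofReal_mul (norm_nonneg c)]
  exact mul_le_mul_right (traceNorm_term_le T e f he hf) _

lemma traceNorm_neg_le (T : H →L[ℂ] H) : traceNorm (-T) ≤ traceNorm T := by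
  have := traceNorm_smul_le (-1 : ℂ) T
  simpa using this

lemma traceNorm_sub_le (S T : H →L[ℂ] H) :
    traceNorm (S - T) ≤ traceNorm S + traceNorm T := by
  rw [sub_eq_add_neg]
  exact (traceNorm_add_le S (-T)).trans (add_le_add_right (traceNorm_neg_le T) _)

/-- A selfadjoint contraction is the real part of a unitary. -/
lemma selfAdjoint_eq_half_unitary [Nontrivial H] (S : H →L[ℂ] H) (hS : IsSelfAdjoint S)
    (h1 : ‖S‖ ≤ 1) :
    ∃ U : H →L[ℂ] H, star U * U = 1 ∧ U * star U = 1 ∧ S = (1 / 2 : ℂ) • (U + star U) := by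
  have hnorm : IsStarNormal S := hS.isStarNormal
  set f : ℂ → ℂ := fun z => z + Complex.I * (Real.sqrt (1 - z.re ^ 2) : ℝ) with hfdef
  have hfc : Continuous f := by
    apply continuous_id.add
    exact continuous_const.mul (Complex.continuous_ofReal.comp
      (Real.continuous_sqrt.comp (by fun_prop)))
  have hspec : ∀ z ∈ spectrum ℂ S, (z.re : ℂ) = z ∧ |z.re| ≤ 1 := by
    intro z hz
    have hre : (z.re : ℂ) = z := hS.spectrumRestricts.rightInvOn hz
    have hn : ‖z‖ ≤ ‖S‖ := spectrum.norm_le_norm_of_mem hz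
    refine ⟨hre, ?_⟩
    have : |z.re| ≤ ‖z‖ := Complex.abs_re_le_norm z
    linarith
  have hmulstar : ∀ z ∈ spectrum ℂ S, f z * star (f z) = 1 ∧ star (f z) * f z = 1 ∧
      f z + star (f z) = 2 * z := by
    intro z hz
    obtain ⟨hre, habs⟩ := hspec z hz
    set r : ℝ := z.re with hr
    set s : ℝ := Real.sqrt (1 - r ^ 2) with hs
    have hs2 : (s : ℝ) ^ 2 = 1 - r ^ 2 := Real.sq_sqrt (by nlinarith [abs_nonneg r, sq_abs r])
    have hfz : f z = (r : ℂ) + Complex.I * (s : ℂ) := by rw [hfdef]; simp [← hre, hs]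
    have hstar : star (f z) = (r : ℂ) - Complex.I * (s : ℂ) := by
      rw [hfz]; simp [Complex.star_def, map_add, map_mul, Complex.conj_I, Complex.conj_ofReal]
      ring
    have hone : ((r : ℂ) + Complex.I * s) * ((r : ℂ) - Complex.I * s) = 1 := by
      have hc : ((r : ℂ)) ^ 2 + (s : ℂ) ^ 2 = 1 := by
        rw [← Complex.ofReal_pow, ← Complex.ofReal_pow, ← Complex.ofReal_add, hs2]
        norm_num
      calc ((r : ℂ) + Complex.I * s) * ((r : ℂ) - Complex.I * s)
          = (r : ℂ) ^ 2 - Complex.I ^ 2 * (s : ℂ) ^ 2 := by ring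
        _ = (r : ℂ) ^ 2 + (s : ℂ) ^ 2 := by rw [Complex.I_sq]; ring
        _ = 1 := hc
    refine ⟨?_, ?_, ?_⟩
    · rw [hstar, hfz]; exact hone
    · rw [hstar, hfz, mul_comm]; exact hone
    · rw [hstar, hfz, ← hre]; ring
  refine ⟨cfc f S, ?_, ?_, ?_⟩
  · rw [← cfc_star f S, ← cfc_mul _ _ S (hfc.star.continuousOn) (hfc.continuousOn)]
    rw [show (fun z => star (f z) * f z) = fun z => star (f z) * f z from rfl]
    rw [cfc_congr (g := fun _ : ℂ => (1 : ℂ)) (fun z hz => (hmulstar z hz).2.1)]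
    exact cfc_const_one ℂ S
  · rw [← cfc_star f S, ← cfc_mul _ _ S (hfc.continuousOn) (hfc.star.continuousOn)]
    rw [cfc_congr (g := fun _ : ℂ => (1 : ℂ)) (fun z hz => (hmulstar z hz).1)]
    exact cfc_const_one ℂ S
  · rw [← cfc_star f S, ← cfc_add S _ _ (hfc.continuousOn) (hfc.star.continuousOn)]
    rw [cfc_congr (g := fun z : ℂ => (2 : ℂ) * z) (fun z hz => (hmulstar z hz).2.2)]
    rw [cfc_const_mul_id (2 : ℂ) S]
    rw [smul_smul]
    norm_num

lemma traceNorm_mul_selfAdjoint_le [Nontrivial H] (T S : H →L[ℂ] H) (hS : IsSelfAdjoint S)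
    {c : ℝ} (hc : ‖S‖ ≤ c) : traceNorm (T * S) ≤ ENNReal.ofReal c * traceNorm T := by
  rcases eq_or_ne S 0 with rfl | hS0
  · refine le_trans (traceNorm_le_of_forall fun n e f he hf => ?_) zero_le
    simp
  · have hSpos : (0 : ℝ) < ‖S‖ := norm_pos_iff.mpr hS0
    set c₀ : ℂ := ((‖S‖ : ℝ) : ℂ) with hc₀
    set S₀ : H →L[ℂ] H := c₀⁻¹ • S with hS₀def
    have hS₀sa : IsSelfAdjoint S₀ := by
      rw [IsSelfAdjoint, hS₀def, star_smul, hS.star_eq, star_inv₀]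
      congr 1
      rw [hc₀, Complex.star_def, Complex.conj_ofReal]
    have hS₀norm : ‖S₀‖ ≤ 1 := by
      rw [hS₀def, norm_smul, norm_inv, hc₀, Complex.norm_real]
      rw [Real.norm_eq_abs, abs_of_pos hSpos]
      rw [inv_mul_cancel₀ (ne_of_gt hSpos)]
    obtain ⟨U, hU1, hU2, hU3⟩ := selfAdjoint_eq_half_unitary S₀ hS₀sa hS₀norm
    have hSrw : S = c₀ • S₀ := by
      rw [hS₀def, smul_smul, mul_inv_cancel₀, one_smul]
      simp [hc₀, ne_of_gt hSpos, Complex.ofReal_eq_zero]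
    have hTS : T * S = (c₀ * (1 / 2 : ℂ)) • (T * U + T * star U) := by
      rw [hSrw, hU3]
      rw [mul_smul_comm, mul_smul_comm, mul_add, smul_smul]
    rw [hTS]
    calc traceNorm ((c₀ * (1 / 2 : ℂ)) • (T * U + T * star U))
        ≤ ENNReal.ofReal ‖c₀ * (1 / 2 : ℂ)‖ * traceNorm (T * U + T * star U) :=
          traceNorm_smul_le _ _
      _ ≤ ENNReal.ofReal (‖S‖ / 2) * (traceNorm (T * U) + traceNorm (T * star U)) := by
          apply mul_le_mul'
          · apply le_of_eq; congr 1
            rw [norm_mul, hc₀, Complex.norm_real, Real.norm_eq_abs, abs_of_pos hSpos]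
            norm_num [mul_one_div]
          · exact traceNorm_add_le _ _
      _ ≤ ENNReal.ofReal (‖S‖ / 2) * (traceNorm T + traceNorm T) := by
          apply mul_le_mul'
          · exact le_rfl
          · refine add_le_add (traceNorm_mul_unitary_le T U hU1)
              (traceNorm_mul_unitary_le T (star U) ?_)
            rw [star_star]; exact hU2
      _ = ENNReal.ofReal ‖S‖ * traceNorm T := by
          rw [← two_mul, ← mul_assoc]
          congr 1
          rw [← ENNReal.ofReal_ofNat, ← ENNReal.ofReal_mul (by positivity)]
          congr 1; ring
      _ ≤ ENNReal.ofReal c * traceNorm T := by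
          exact mul_le_mul' (ENNReal.ofReal_le_ofReal hc) le_rfl

lemma traceNorm_intervalIntegral_le {t : ℝ} (ht : 0 ≤ t) (Φ : ℝ → H →L[ℂ] H) (g : ℝ → ℝ)
    (hΦ : Continuous Φ) (hg : Continuous g)
    (hg0 : ∀ s ∈ Set.Icc 0 t, 0 ≤ g s)
    (hb : ∀ s ∈ Set.Icc 0 t, traceNorm (Φ s) ≤ ENNReal.ofReal (g s)) :
    traceNorm (∫ s in (0:ℝ)..t, Φ s) ≤ ENNReal.ofReal (∫ s in (0:ℝ)..t, g s) := by
  refine traceNorm_le_of_forall fun n e f he hf => ?_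
  apply ENNReal.ofReal_le_ofReal
  have hΦint : IntervalIntegrable Φ MeasureTheory.volume 0 t := hΦ.intervalIntegrable 0 t
  have happly : ∀ i, ⟪e i, (∫ s in (0:ℝ)..t, Φ s) (f i)⟫_ℂ
      = ∫ s in (0:ℝ)..t, ⟪e i, Φ s (f i)⟫_ℂ := by
    intro i
    rw [ContinuousLinearMap.intervalIntegral_apply hΦint]
    have hc : Continuous fun s => Φ s (f i) :=
      (ContinuousLinearMap.apply ℂ H (f i)).continuous.comp hΦ
    exact ((innerSL ℂ (e i)).intervalIntegral_comp_comm (hc.intervalIntegrable 0 t)).symm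
  have hcont : ∀ i, Continuous fun s => ‖⟪e i, Φ s (f i)⟫_ℂ‖ := by
    intro i
    have hc : Continuous fun s => Φ s (f i) :=
      (ContinuousLinearMap.apply ℂ H (f i)).continuous.comp hΦ
    exact ((innerSL ℂ (e i)).continuous.comp hc).norm
  calc ∑ i, ‖⟪e i, (∫ s in (0:ℝ)..t, Φ s) (f i)⟫_ℂ‖
      = ∑ i, ‖∫ s in (0:ℝ)..t, ⟪e i, Φ s (f i)⟫_ℂ‖ := by simp_rw [happly]
    _ ≤ ∑ i, ∫ s in (0:ℝ)..t, ‖⟪e i, Φ s (f i)⟫_ℂ‖ := by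
        refine Finset.sum_le_sum fun i _ => ?_
        exact intervalIntegral.norm_integral_le_integral_norm ht
    _ = ∫ s in (0:ℝ)..t, ∑ i, ‖⟪e i, Φ s (f i)⟫_ℂ‖ :=
        (intervalIntegral.integral_finset_sum
          (fun i _ => (hcont i).intervalIntegrable 0 t)).symm
    _ ≤ ∫ s in (0:ℝ)..t, g s := by
        refine intervalIntegral.integral_mono_on ht
          ((continuous_finset_sum _ fun i _ => hcont i).intervalIntegrable 0 t)
          (hg.intervalIntegrable 0 t) fun s hs => ?_
        have h1 := (traceNorm_term_le (Φ s) e f he hf).trans (hb s hs)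
        rwa [ENNReal.ofReal_le_ofReal_iff (hg0 s hs)] at h1

end Aux

open NormedSpace in
lemma exp_mul_sub_mul_exp {𝔸 : Type*} [NormedRing 𝔸] [NormedAlgebra ℝ 𝔸] [CompleteSpace 𝔸]
    (X Y D : 𝔸) (τ : ℝ) :
    exp (τ • X) * D - D * exp (τ • Y) =
      ∫ s in (0:ℝ)..τ, exp (s • X) * (X * D - D * Y) * exp ((τ - s) • Y) := by
  have hF : ∀ s : ℝ, HasDerivAt (fun u : ℝ => exp (u • X) * D * exp ((τ - u) • Y))
      (exp (s • X) * (X * D - D * Y) * exp ((τ - s) • Y)) s := by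
    intro s
    have h1 : HasDerivAt (fun u : ℝ => exp (u • X)) (exp (s • X) * X) s :=
      hasDerivAt_exp_smul_const X s
    have h3 : HasDerivAt (fun u : ℝ => τ - u) (-1 : ℝ) s := by
      simpa using (hasDerivAt_id s).const_sub τ
    have h4 : HasDerivAt (fun u : ℝ => exp (u • Y)) (Y * exp ((τ - s) • Y)) (τ - s) :=
      hasDerivAt_exp_smul_const' Y (τ - s)
    have h2 : HasDerivAt (fun u : ℝ => exp ((τ - u) • Y))
        (-(Y * exp ((τ - s) • Y))) s := by
      have := h4.scomp s h3
      simpa [Function.comp_def] using this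
    have h5 := (h1.mul_const D).mul h2
    convert h5 using 1
    · rfl
    simp only [mul_neg, mul_sub, sub_mul, mul_assoc]
    abel
  have hcont : Continuous fun s : ℝ => exp (s • X) * (X * D - D * Y) * exp ((τ - s) • Y) := by
    letI : NormedAlgebra ℚ 𝔸 := .restrictScalars ℚ ℝ 𝔸
    refine Continuous.mul (Continuous.mul ?_ continuous_const) ?_
    · exact exp_continuous.comp (by fun_prop)
    · exact exp_continuous.comp (by fun_prop)
  have hFTC := intervalIntegral.integral_eq_sub_of_hasDerivAt (f := fun u : ℝ =>
      exp (u • X) * D * exp ((τ - u) • Y)) (fun s _ => hF s)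
      (hcont.intervalIntegrable 0 τ)
  rw [hFTC]
  simp [exp_zero]

open NormedSpace in
/-- If `A`, `B` are bounded self-adjoint, `Δ` is trace class with
`‖[A,B]‖ ≤ ε`, `‖Δ‖_tr ≤ C` and `‖Δ(A−B)‖_tr ≤ ε`, then for `t ≥ 0`,
`‖Δ(e^{itA} − e^{itB})‖_tr ≤ ε t (1 + (C/2) t)`. -/
theorem traceNorm_delta_exp_diff {H : Type*} [NormedAddCommGroup H] [InnerProductSpace ℂ H]
    [CompleteSpace H] [TopologicalSpace.SeparableSpace H]
    (A B Δ : H →L[ℂ] H) (hA : IsSelfAdjoint A) (hB : IsSelfAdjoint B)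
    (ε C : ℝ) (hε : 0 ≤ ε) (hC : 0 ≤ C)
    (hcomm : ‖A * B - B * A‖ ≤ ε)
    (hΔ : traceNorm Δ ≤ ENNReal.ofReal C)
    (hΔAB : traceNorm (Δ * (A - B)) ≤ ENNReal.ofReal ε)
    (t : ℝ) (ht : 0 ≤ t) :
    traceNorm (Δ * (NormedSpace.exp ((t : ℂ) • (Complex.I • A))
        - NormedSpace.exp ((t : ℂ) • (Complex.I • B))))
      ≤ ENNReal.ofReal (ε * t * (1 + C / 2 * t)) := by
  rcases subsingleton_or_nontrivial H with hH | hH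
  · refine le_trans (traceNorm_le_of_forall fun n e f he hf => ?_) zero_le
    have h0 : ∀ i : Fin n, e i = 0 := fun i => Subsingleton.elim _ _
    simp [h0]
  · -- nontrivial case
    set M : H →L[ℂ] H := Complex.I • A with hMdef
    set N : H →L[ℂ] H := Complex.I • B with hNdef
    have hconvM : exp ((t : ℂ) • M) = exp (t • M) := by
      rw [Complex.coe_smul]
    have hconvN : exp ((t : ℂ) • N) = exp (t • N) := by
      rw [Complex.coe_smul]
    rw [hconvM, hconvN]
    -- skew-adjointness and unitarity
    have hstarM : star M = -M := by
      rw [hMdef, star_smul, Complex.star_def, Complex.conj_I, hA.star_eq, neg_smul]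
    have hstarN : star N = -N := by
      rw [hNdef, star_smul, Complex.star_def, Complex.conj_I, hB.star_eq, neg_smul]
    have hskew : ∀ X : H →L[ℂ] H, star X = -X → ∀ s : ℝ,
        star (exp (s • X)) * exp (s • X) = 1 := by
      intro X hX s
      letI : NormedAlgebra ℚ (H →L[ℂ] H) := .restrictScalars ℚ ℂ (H →L[ℂ] H)
      have h1 : star (exp (s • X)) = exp (-(s • X)) := by
        rw [star_exp, star_smul, star_trivial, hX, smul_neg]
      rw [h1, ← exp_add_of_commute ((Commute.refl (s • X)).neg_left),
        neg_add_cancel, exp_zero]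
    have TNexp : ∀ (T X : H →L[ℂ] H), star X = -X → ∀ s : ℝ,
        traceNorm (T * exp (s • X)) ≤ traceNorm T := fun T X hX s =>
      traceNorm_mul_unitary_le _ _ (hskew X hX s)
    -- the selfadjoint commutator
    have hSsa : IsSelfAdjoint (Complex.I • (A * B - B * A)) := by
      rw [IsSelfAdjoint, star_smul, Complex.star_def, Complex.conj_I, star_sub, star_mul,
        star_mul, hA.star_eq, hB.star_eq]
      module
    have hSnorm : ‖Complex.I • (A * B - B * A)‖ ≤ ε := by
      rw [norm_smul, Complex.norm_I, one_mul]; exact hcomm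
    have hMBBM : M * B - B * M = Complex.I • (A * B - B * A) := by
      rw [hMdef, smul_mul_assoc, mul_smul_comm, ← smul_sub]
    -- commutator trace-norm bound
    have hKbound : ∀ s : ℝ, 0 ≤ s →
        traceNorm (Δ * (exp (s • M) * B - B * exp (s • M)))
          ≤ ENNReal.ofReal (C * ε * s) := by
      intro s hs
      have hfc : Continuous fun r : ℝ =>
          exp (r • M) * (M * B - B * M) * exp ((s - r) • M) := by
        letI : NormedAlgebra ℚ (H →L[ℂ] H) := .restrictScalars ℚ ℂ (H →L[ℂ] H)
        refine Continuous.mul (Continuous.mul ?_ continuous_const) ?_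
        · exact exp_continuous.comp (by fun_prop)
        · exact exp_continuous.comp (by fun_prop)
      have hmove : Δ * (exp (s • M) * B - B * exp (s • M)) =
          ∫ r in (0:ℝ)..s, Δ * (exp (r • M) * (M * B - B * M) * exp ((s - r) • M)) := by
        rw [exp_mul_sub_mul_exp M M B s]
        have := (ContinuousLinearMap.mul ℂ (H →L[ℂ] H) Δ).intervalIntegral_comp_comm
          (μ := MeasureTheory.volume) (hfc.intervalIntegrable 0 s)
        simpa using this.symm
      rw [hmove]
      have hb : ∀ r ∈ Set.Icc (0:ℝ) s,
          traceNorm (Δ * (exp (r • M) * (M * B - B * M) * exp ((s - r) • M)))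
            ≤ ENNReal.ofReal (C * ε) := by
        intro r _
        have e1 : Δ * (exp (r • M) * (M * B - B * M) * exp ((s - r) • M)) =
            Δ * exp (r • M) * (M * B - B * M) * exp ((s - r) • M) := by
          rw [← mul_assoc, ← mul_assoc]
        rw [e1]
        calc traceNorm (Δ * exp (r • M) * (M * B - B * M) * exp ((s - r) • M))
            ≤ traceNorm (Δ * exp (r • M) * (M * B - B * M)) := TNexp _ M hstarM _
          _ ≤ ENNReal.ofReal ε * traceNorm (Δ * exp (r • M)) := by
              rw [hMBBM]
              exact traceNorm_mul_selfAdjoint_le _ _ hSsa hSnorm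
          _ ≤ ENNReal.ofReal ε * ENNReal.ofReal C :=
              mul_le_mul' le_rfl ((TNexp Δ M hstarM r).trans hΔ)
          _ = ENNReal.ofReal (C * ε) := by
              rw [← ENNReal.ofReal_mul hε, mul_comm]
      have hle := traceNorm_intervalIntegral_le (H := H) hs
        (fun r => Δ * (exp (r • M) * (M * B - B * M) * exp ((s - r) • M)))
        (fun _ => C * ε) (continuous_const.mul hfc) continuous_const
        (fun r _ => by positivity) hb
      refine hle.trans (ENNReal.ofReal_le_ofReal ?_)
      rw [intervalIntegral.integral_const, smul_eq_mul, sub_zero]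
      nlinarith
    -- representation of the main difference
    have hfc2 : Continuous fun s : ℝ =>
        exp (s • M) * (M - N) * exp ((t - s) • N) := by
      letI : NormedAlgebra ℚ (H →L[ℂ] H) := .restrictScalars ℚ ℂ (H →L[ℂ] H)
      refine Continuous.mul (Continuous.mul ?_ continuous_const) ?_
      · exact exp_continuous.comp (by fun_prop)
      · exact exp_continuous.comp (by fun_prop)
    have hrep : Δ * (exp (t • M) - exp (t • N)) =
        ∫ s in (0:ℝ)..t, Δ * (exp (s • M) * (M - N) * exp ((t - s) • N)) := by
      have h0 := exp_mul_sub_mul_exp M N 1 t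
      simp only [mul_one, one_mul] at h0
      rw [h0]
      have := (ContinuousLinearMap.mul ℂ (H →L[ℂ] H) Δ).intervalIntegral_comp_comm
        (μ := MeasureTheory.volume) (hfc2.intervalIntegrable 0 t)
      simpa using this.symm
    rw [hrep]
    have hb2 : ∀ s ∈ Set.Icc (0:ℝ) t,
        traceNorm (Δ * (exp (s • M) * (M - N) * exp ((t - s) • N)))
          ≤ ENNReal.ofReal (ε + C * ε * s) := by
      intro s hs
      have hcommA : exp (s • M) * A = A * exp (s • M) := by
        have hc : Commute (s • M) A := by
          rw [hMdef]
          exact (((Commute.refl A).smul_left Complex.I).smul_left s)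
        exact hc.exp_left.eq
      have hMN : M - N = Complex.I • (A - B) := by
        rw [hMdef, hNdef, ← smul_sub]
      have halg : exp (s • M) * (M - N) =
          Complex.I • ((A - B) * exp (s • M)
            - (exp (s • M) * B - B * exp (s • M))) := by
        rw [hMN, mul_smul_comm]
        congr 1
        rw [mul_sub, hcommA, sub_mul]
        abel
      have h2 : Δ * (exp (s • M) * (M - N) * exp ((t - s) • N)) =
          Complex.I • (Δ * (A - B) * exp (s • M) * exp ((t - s) • N)
            - Δ * (exp (s • M) * B - B * exp (s • M)) * exp ((t - s) • N)) := by
        rw [halg, smul_mul_assoc, mul_smul_comm]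
        congr 1
        simp only [mul_sub, sub_mul, mul_assoc]
      have hCεs : (0:ℝ) ≤ C * ε * s := by
        have := hs.1; positivity
      calc traceNorm (Δ * (exp (s • M) * (M - N) * exp ((t - s) • N)))
          ≤ ENNReal.ofReal ‖(Complex.I : ℂ)‖ *
            traceNorm (Δ * (A - B) * exp (s • M) * exp ((t - s) • N)
              - Δ * (exp (s • M) * B - B * exp (s • M)) * exp ((t - s) • N)) := by
            rw [h2]; exact traceNorm_smul_le _ _
        _ = traceNorm (Δ * (A - B) * exp (s • M) * exp ((t - s) • N)
              - Δ * (exp (s • M) * B - B * exp (s • M)) * exp ((t - s) • N)) := by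
            rw [Complex.norm_I, ENNReal.ofReal_one, one_mul]
        _ ≤ traceNorm (Δ * (A - B) * exp (s • M) * exp ((t - s) • N))
              + traceNorm (Δ * (exp (s • M) * B - B * exp (s • M))
                  * exp ((t - s) • N)) := traceNorm_sub_le _ _
        _ ≤ ENNReal.ofReal ε + ENNReal.ofReal (C * ε * s) := by
            refine add_le_add ?_ ?_
            · exact (TNexp _ N hstarN _).trans ((TNexp _ M hstarM _).trans hΔAB)
            · exact (TNexp _ N hstarN _).trans (hKbound s hs.1)
        _ = ENNReal.ofReal (ε + C * ε * s) := (ENNReal.ofReal_add hε hCεs).symm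
    have hle := traceNorm_intervalIntegral_le (H := H) ht
      (fun s => Δ * (exp (s • M) * (M - N) * exp ((t - s) • N)))
      (fun s => ε + C * ε * s) (continuous_const.mul hfc2) (by fun_prop)
      (fun s hs => by
        have h1 : 0 ≤ C * ε * s := mul_nonneg (mul_nonneg hC hε) hs.1
        show 0 ≤ ε + C * ε * s
        linarith) hb2
    refine hle.trans (ENNReal.ofReal_le_ofReal ?_)
    have hint : (∫ s in (0:ℝ)..t, (ε + C * ε * s)) = ε * t * (1 + C / 2 * t) := by
      rw [intervalIntegral.integral_add intervalIntegrable_const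
        (Continuous.intervalIntegrable (by fun_prop) 0 t :
          IntervalIntegrable (fun s : ℝ => C * ε * s) MeasureTheory.volume 0 t)]
      rw [intervalIntegral.integral_const, intervalIntegral.integral_const_mul,
        integral_id]
      simp only [smul_eq_mul, sub_zero]
      ring
    rw [hint]
end

section
/- Let P_N be the Bargmann projection with kernel P_N(x,z) = N e^{N(x z̄ − |x|²/2 − |z|²/2)} on L²(ℂ, γ). For any Lipschitz function g : ℂ → ℝ viewed as a multiplication operator, the commutator satisfies ‖[P_N, g]‖ ≤ C N^{-1/2} Lip(g), where C = ∫₀^∞ √t e^{-t/2} dt and Lip(g) is the Lipschitz constant of g. -/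
open MeasureTheory
open scoped ComplexConjugate ENNReal NNReal

/-- The measure `γ` on `ℂ` with `dγ(z) = π⁻¹ d²z`. -/
noncomputable def gammaMeasure : Measure ℂ := ENNReal.ofReal (1 / Real.pi) • (volume : Measure ℂ)

/-- The Bargmann kernel `P_N(x,z) = N e^{N(x z̄ − |x|²/2 − |z|²/2)}`. -/
noncomputable def bargmannKernel (N : ℝ) (x z : ℂ) : ℂ :=
  (N : ℂ) * Complex.exp ((N : ℂ) * (x * conj z - (‖x‖ : ℂ) ^ 2 / 2 - (‖z‖ : ℂ) ^ 2 / 2))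

section Aux

open Real Set

instance : SFinite gammaMeasure := by unfold gammaMeasure; infer_instance

lemma norm_bargmannKernel (N : ℝ) (hN : 0 ≤ N) (x z : ℂ) :
    ‖bargmannKernel N x z‖ = N * Real.exp (-(N * ‖x - z‖ ^ 2) / 2) := by
  have e1 : ((N : ℂ) * (x * conj z - (‖x‖ : ℂ) ^ 2 / 2 - (‖z‖ : ℂ) ^ 2 / 2)) =
      (N : ℂ) * (x * conj z) - ((N * (‖x‖ ^ 2 / 2) : ℝ) : ℂ) - ((N * (‖z‖ ^ 2 / 2) : ℝ) : ℂ) := by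
    push_cast; ring
  rw [bargmannKernel, norm_mul, Complex.norm_exp,
    Complex.norm_real, Real.norm_of_nonneg hN, e1]
  have h : ‖x - z‖ ^ 2 = (x.re - z.re) ^ 2 + (x.im - z.im) ^ 2 := by
    rw [Complex.sq_norm, Complex.normSq_apply]
    simp [Complex.sub_re, Complex.sub_im]; ring
  have hx : ‖x‖ ^ 2 = x.re ^ 2 + x.im ^ 2 := by
    rw [Complex.sq_norm, Complex.normSq_apply]; ring
  have hz : ‖z‖ ^ 2 = z.re ^ 2 + z.im ^ 2 := by
    rw [Complex.sq_norm, Complex.normSq_apply]; ring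
  congr 1
  simp only [Complex.sub_re, Complex.mul_re, Complex.ofReal_re, Complex.ofReal_im,
    Complex.conj_re, Complex.conj_im, Complex.mul_im]
  rw [h, hx, hz]
  ring

lemma integrable_gauss (b : ℝ) (hb : 0 < b) :
    Integrable (fun z : ℂ => Real.exp (-b * ‖z‖ ^ 2)) volume := by
  have h := GaussianFourier.integrable_cexp_neg_mul_sq_norm_add (b := (b : ℂ))
    (by simpa using hb) 0 (0 : ℂ)
  refine h.norm.congr (Filter.Eventually.of_forall fun z => ?_)
  simp only [Complex.norm_exp]
  congr 1
  simp [Complex.add_re, Complex.mul_re]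
  left
  rw [← Complex.ofReal_pow, Complex.ofReal_re]

lemma integrable_poly_gauss (b c₀ c₁ c₂ : ℝ) (hb : 0 < b) :
    Integrable (fun z : ℂ => (c₀ + c₁ * ‖z‖ + c₂ * ‖z‖ ^ 2) * Real.exp (-b * ‖z‖ ^ 2)) volume := by
  set M := |c₀| + |c₁| * (1 + 2 / b) + |c₂| * (2 / b) with hM
  have h2b : (0:ℝ) ≤ 2 / b := div_nonneg (by norm_num) hb.le
  have hM0 : 0 ≤ M := by
    rw [hM]
    have : (0:ℝ) ≤ 1 + 2 / b := by linarith
    positivity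
  have key : ∀ t : ℝ, 0 ≤ t → |c₀ + c₁ * t + c₂ * t ^ 2| * Real.exp (-b * t ^ 2)
      ≤ M * Real.exp (-(b / 2) * t ^ 2) := by
    intro t ht
    have h1 : Real.exp (-b * t ^ 2) = Real.exp (-(b / 2) * t ^ 2) * Real.exp (-(b / 2) * t ^ 2) := by
      rw [← Real.exp_add]; ring_nf
    have h2 : (b / 2) * t ^ 2 ≤ Real.exp ((b / 2) * t ^ 2) := by
      nlinarith [Real.add_one_le_exp ((b / 2) * t ^ 2)]
    have hE : 0 < Real.exp (-(b / 2) * t ^ 2) := Real.exp_pos _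
    have hE' : Real.exp (-(b / 2) * t ^ 2) ≤ 1 := by
      rw [Real.exp_le_one_iff]; nlinarith
    have hmul : Real.exp (-(b / 2) * t ^ 2) * Real.exp ((b / 2) * t ^ 2) = 1 := by
      rw [← Real.exp_add]; ring_nf; exact Real.exp_zero
    have h3 : Real.exp (-(b / 2) * t ^ 2) * ((b / 2) * t ^ 2) ≤ 1 := by
      calc Real.exp (-(b / 2) * t ^ 2) * ((b / 2) * t ^ 2)
          ≤ Real.exp (-(b / 2) * t ^ 2) * Real.exp ((b / 2) * t ^ 2) :=
            mul_le_mul_of_nonneg_left h2 hE.le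
        _ = 1 := hmul
    have ht2 : t ^ 2 * Real.exp (-(b / 2) * t ^ 2) ≤ 2 / b := by
      rw [le_div_iff₀ hb]; nlinarith [h3]
    have ht1 : t * Real.exp (-(b / 2) * t ^ 2) ≤ 1 + 2 / b := by
      have htb : t ≤ 1 + t ^ 2 := by nlinarith [sq_nonneg (t - 1)]
      nlinarith [mul_le_mul_of_nonneg_right htb hE.le, ht2, hE']
    have habs : |c₀ + c₁ * t + c₂ * t ^ 2| ≤ |c₀| + |c₁| * t + |c₂| * t ^ 2 := by
      calc |c₀ + c₁ * t + c₂ * t ^ 2| ≤ |c₀ + c₁ * t| + |c₂ * t ^ 2| := abs_add_le _ _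
        _ ≤ |c₀| + |c₁ * t| + |c₂ * t ^ 2| := by
            have := abs_add_le c₀ (c₁ * t); linarith
        _ = |c₀| + |c₁| * t + |c₂| * t ^ 2 := by
            rw [abs_mul, abs_mul, abs_of_nonneg ht, abs_of_nonneg (by positivity : (0:ℝ) ≤ t ^ 2)]
    rw [h1, ← mul_assoc]
    refine mul_le_mul_of_nonneg_right ?_ hE.le
    calc |c₀ + c₁ * t + c₂ * t ^ 2| * Real.exp (-(b / 2) * t ^ 2)
        ≤ (|c₀| + |c₁| * t + |c₂| * t ^ 2) * Real.exp (-(b / 2) * t ^ 2) :=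
          mul_le_mul_of_nonneg_right habs hE.le
      _ = |c₀| * Real.exp (-(b / 2) * t ^ 2) + |c₁| * (t * Real.exp (-(b / 2) * t ^ 2))
            + |c₂| * (t ^ 2 * Real.exp (-(b / 2) * t ^ 2)) := by ring
      _ ≤ |c₀| * 1 + |c₁| * (1 + 2 / b) + |c₂| * (2 / b) := by
          refine add_le_add (add_le_add ?_ ?_) ?_
          · exact mul_le_mul_of_nonneg_left hE' (abs_nonneg _)
          · exact mul_le_mul_of_nonneg_left ht1 (abs_nonneg _)
          · exact mul_le_mul_of_nonneg_left ht2 (abs_nonneg _)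
      _ = M := by rw [hM]; ring
  refine Integrable.mono' ((integrable_gauss (b / 2) (by linarith)).const_mul M) ?_ ?_
  · apply Continuous.aestronglyMeasurable; continuity
  · refine Filter.Eventually.of_forall fun z => ?_
    rw [norm_mul, Real.norm_of_nonneg (Real.exp_pos _).le, Real.norm_eq_abs]
    calc |c₀ + c₁ * ‖z‖ + c₂ * ‖z‖ ^ 2| * Real.exp (-b * ‖z‖ ^ 2)
        ≤ M * Real.exp (-(b / 2) * ‖z‖ ^ 2) := key ‖z‖ (norm_nonneg z)

lemma rpow_neg_three_half (a : ℝ) (ha : 0 < a) : a ^ (-(3:ℝ)/2) = 1 / Real.sqrt a ^ 3 := by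
  rw [show (-(3:ℝ)/2) = -((1/2) * 3) by ring, Real.rpow_neg ha.le, Real.rpow_mul ha.le,
    ← Real.sqrt_eq_rpow]
  rw [show ((3:ℝ) = ((3:ℕ):ℝ)) by norm_num, Real.rpow_natCast]
  rw [one_div]

lemma C_val : ∫ t in Ioi (0:ℝ), Real.sqrt t * Real.exp (-t/2) = Real.sqrt 2 * Real.sqrt π := by
  have h : ∀ t ∈ Ioi (0:ℝ), Real.sqrt t * Real.exp (-t/2)
      = t ^ ((1:ℝ)/2) * Real.exp (-(1/2) * t ^ (1:ℝ)) := by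
    intro t ht
    rw [Real.sqrt_eq_rpow, Real.rpow_one]
    ring_nf
  rw [setIntegral_congr_fun measurableSet_Ioi h,
    integral_rpow_mul_exp_neg_mul_rpow (by norm_num) (by norm_num) (by norm_num)]
  have h32 : ((1:ℝ)/2 + 1) / 1 = 3/2 := by norm_num
  rw [h32]
  have hG : Real.Gamma (3/2) = Real.sqrt π / 2 := by
    rw [show ((3:ℝ)/2) = 1/2 + 1 by norm_num, Real.Gamma_add_one (by norm_num),
      Real.Gamma_one_half_eq]
    ring
  have hb : ((1:ℝ)/2) ^ (-(3:ℝ)/2) = 2 * Real.sqrt 2 := by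
    rw [show ((1:ℝ)/2) = 2⁻¹ by norm_num, Real.inv_rpow (by norm_num : (0:ℝ) ≤ 2),
      show (-(3:ℝ)/2) = -(3/2) by ring, Real.rpow_neg (by norm_num : (0:ℝ) ≤ 2), inv_inv,
      show ((3:ℝ)/2) = 1 + 1/2 by norm_num,
      Real.rpow_add (by norm_num : (0:ℝ) < 2), Real.rpow_one, ← Real.sqrt_eq_rpow]
  rw [show (-((1:ℝ)/2 + 1) / 1) = -(3:ℝ)/2 by norm_num, hb, hG]
  have h2 : Real.sqrt 2 ^ 2 = 2 := Real.sq_sqrt (by norm_num)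
  ring

lemma gauss_moment (N : ℝ) (hN : 0 < N) :
    ∫ w : ℂ, ‖w‖ * Real.exp (-(N * ‖w‖ ^ 2) / 2)
      = π * Real.sqrt 2 * Real.sqrt π / Real.sqrt N ^ 3 := by
  have h : (fun w : ℂ => ‖w‖ * Real.exp (-(N * ‖w‖ ^ 2) / 2))
      = fun w : ℂ => ‖w‖ ^ (1:ℝ) * Real.exp (-(N/2) * ‖w‖ ^ (2:ℝ)) := by
    funext w
    rw [Real.rpow_one, show ((2:ℝ) = ((2:ℕ):ℝ)) by norm_num, Real.rpow_natCast]
    ring_nf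
  rw [h, Complex.integral_rpow_mul_exp_neg_mul_rpow (by norm_num) (by norm_num) (by positivity)]
  rw [show (-((1:ℝ) + 2) / 2) = -(3:ℝ)/2 by norm_num, show (((1:ℝ) + 2) / 2) = 3/2 by norm_num]
  have hG : Real.Gamma (3/2) = Real.sqrt π / 2 := by
    rw [show ((3:ℝ)/2) = 1/2 + 1 by norm_num, Real.Gamma_add_one (by norm_num),
      Real.Gamma_one_half_eq]
    ring
  have h3 : Real.sqrt 2 ^ 3 = 2 * Real.sqrt 2 := by
    have h2 : Real.sqrt 2 ^ 2 = 2 := Real.sq_sqrt (by norm_num)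
    rw [pow_succ, h2]
  have hsN : 0 < Real.sqrt N := Real.sqrt_pos.mpr hN
  rw [hG, rpow_neg_three_half _ (by positivity), Real.sqrt_div hN.le, div_pow, one_div_div, h3]
  field_simp

lemma memL2_shift_poly_gauss (x : ℂ) (a b N : ℝ) (hN : 0 < N) :
    MemLp (fun z : ℂ => (a + b * ‖z - x‖) * Real.exp (-(N * ‖z - x‖ ^ 2) / 2)) 2
      gammaMeasure := by
  have hvol : MemLp (fun z : ℂ => (a + b * ‖z - x‖) * Real.exp (-(N * ‖z - x‖ ^ 2) / 2)) 2
      (volume : Measure ℂ) := by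
    rw [memLp_two_iff_integrable_sq (by apply Continuous.aestronglyMeasurable; continuity)]
    have hsq : (fun z : ℂ => ((a + b * ‖z - x‖) * Real.exp (-(N * ‖z - x‖ ^ 2) / 2)) ^ 2)
        = (fun w : ℂ => (a ^ 2 + (2 * a * b) * ‖w‖ + b ^ 2 * ‖w‖ ^ 2) * Real.exp (-N * ‖w‖ ^ 2))
          ∘ (fun z : ℂ => z + (-x)) := by
      funext z
      have : z + (-x) = z - x := by ring
      rw [Function.comp_apply, this]
      have he : Real.exp (-(N * ‖z - x‖ ^ 2) / 2) ^ 2 = Real.exp (-N * ‖z - x‖ ^ 2) := by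
        rw [sq, ← Real.exp_add]; ring_nf
      rw [mul_pow, he]; ring
    rw [hsq]
    rw [(measurePreserving_add_right volume (-x)).integrable_comp_emb
      (MeasurableEquiv.addRight (-x)).measurableEmbedding]
    exact integrable_poly_gauss N (a ^ 2) (2 * a * b) (b ^ 2) hN
  exact hvol.smul_measure ENNReal.ofReal_ne_top

lemma continuous_bargmannKernel (N : ℝ) (x : ℂ) :
    Continuous (fun z => bargmannKernel N x z) := by
  unfold bargmannKernel; continuity

lemma memL2_kernel (N : ℝ) (hN : 0 < N) (x : ℂ) :
    MemLp (fun z => bargmannKernel N x z) 2 gammaMeasure := by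
  refine MemLp.of_le (memL2_shift_poly_gauss x N 0 N hN)
    ((continuous_bargmannKernel N x).aestronglyMeasurable) ?_
  refine Filter.Eventually.of_forall fun z => ?_
  rw [norm_bargmannKernel N hN.le x z, norm_sub_rev x z]
  have he : (N + 0 * ‖z - x‖) * Real.exp (-(N * ‖z - x‖ ^ 2) / 2)
      = N * Real.exp (-(N * ‖z - x‖ ^ 2) / 2) := by ring
  rw [Real.norm_eq_abs, he, abs_of_nonneg (mul_nonneg hN.le (Real.exp_pos _).le)]

lemma memL2_kernel_g (N : ℝ) (hN : 0 < N) (x : ℂ) (g : ℂ → ℝ) (L : ℝ≥0)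
    (hg : LipschitzWith L g) :
    MemLp (fun z => (g z : ℂ) * bargmannKernel N x z) 2 gammaMeasure := by
  refine MemLp.of_le (memL2_shift_poly_gauss x (N * |g x|) (N * L) N hN)
    (Continuous.aestronglyMeasurable (by
      exact (Complex.continuous_ofReal.comp hg.continuous).mul (continuous_bargmannKernel N x)))
    ?_
  refine Filter.Eventually.of_forall fun z => ?_
  rw [norm_mul, norm_bargmannKernel N hN.le x z, norm_sub_rev x z, Complex.norm_real,
    Real.norm_eq_abs, Real.norm_eq_abs]
  have hgz : |g z| ≤ |g x| + L * ‖z - x‖ := by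
    have h1 := hg.dist_le_mul z x
    rw [Real.dist_eq, dist_eq_norm] at h1
    have h2 := abs_sub_abs_le_abs_sub (g z) (g x)
    linarith
  have hrhs : (N * |g x| + N * (L : ℝ) * ‖z - x‖) * Real.exp (-(N * ‖z - x‖ ^ 2) / 2) =
      ((|g x| + (L : ℝ) * ‖z - x‖) * N) * Real.exp (-(N * ‖z - x‖ ^ 2) / 2) := by ring
  rw [hrhs, abs_of_nonneg (by positivity : (0:ℝ) ≤ ((|g x| + (L : ℝ) * ‖z - x‖) * N) *
    Real.exp (-(N * ‖z - x‖ ^ 2) / 2))]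
  calc |g z| * (N * Real.exp (-(N * ‖z - x‖ ^ 2) / 2))
      ≤ (|g x| + (L : ℝ) * ‖z - x‖) * (N * Real.exp (-(N * ‖z - x‖ ^ 2) / 2)) :=
        mul_le_mul_of_nonneg_right hgz (by positivity)
    _ = (|g x| + (L : ℝ) * ‖z - x‖) * N * Real.exp (-(N * ‖z - x‖ ^ 2) / 2) := by ring

lemma integrable_kernel_mul (N : ℝ) (hN : 0 < N) (x : ℂ) (v : ℂ → ℂ)
    (hv : MemLp v 2 gammaMeasure) :
    Integrable (fun z => bargmannKernel N x z * v z) gammaMeasure := by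
  have h := hv.smul (memL2_kernel N hN x) (p := 2) (q := 2) (r := 1)
  rwa [memLp_one_iff_integrable] at h

lemma integrable_kernel_mul_g (N : ℝ) (hN : 0 < N) (x : ℂ) (g : ℂ → ℝ) (L : ℝ≥0)
    (hg : LipschitzWith L g) (v : ℂ → ℂ) (hv : MemLp v 2 gammaMeasure) :
    Integrable (fun z => bargmannKernel N x z * ((g z : ℂ) * v z)) gammaMeasure := by
  have h := hv.smul (memL2_kernel_g N hN x g L hg) (p := 2) (q := 2) (r := 1)
  rw [memLp_one_iff_integrable] at h
  refine h.congr (Filter.Eventually.of_forall fun z => ?_)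
  show (g z : ℂ) * bargmannKernel N x z * v z = bargmannKernel N x z * ((g z : ℂ) * v z)
  ring

/-- The Schur-test majorant kernel. -/
noncomputable def schurH (N L : ℝ) (x z : ℂ) : ℝ≥0∞ :=
  ENNReal.ofReal (L * ‖x - z‖ * (N * Real.exp (-(N * ‖x - z‖ ^ 2) / 2)))

lemma row_integral (N L' : ℝ) (hN : 0 < N) (hL : 0 ≤ L') (w : ℂ) :
    ∫⁻ y, ENNReal.ofReal (L' * ‖y - w‖ * (N * Real.exp (-(N * ‖y - w‖ ^ 2) / 2))) ∂gammaMeasure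
      = ENNReal.ofReal (Real.sqrt 2 * Real.sqrt π * (Real.sqrt N)⁻¹ * L') := by
  rw [gammaMeasure, lintegral_smul_measure]
  have htrans := (measurePreserving_add_right volume (-w)).lintegral_comp_emb
    (MeasurableEquiv.addRight (-w)).measurableEmbedding
    (fun y => ENNReal.ofReal (L' * ‖y‖ * (N * Real.exp (-(N * ‖y‖ ^ 2) / 2))))
  simp only [← sub_eq_add_neg] at htrans
  rw [htrans]
  have hint : Integrable (fun y : ℂ => L' * ‖y‖ * (N * Real.exp (-(N * ‖y‖ ^ 2) / 2))) volume := by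
    refine (integrable_poly_gauss (N/2) 0 (L' * N) 0 (by positivity)).congr
      (Filter.Eventually.of_forall fun y => ?_)
    show (0 + L' * N * ‖y‖ + 0 * ‖y‖ ^ 2) * Real.exp (-(N/2) * ‖y‖ ^ 2)
        = L' * ‖y‖ * (N * Real.exp (-(N * ‖y‖ ^ 2) / 2))
    rw [show -(N/2) * ‖y‖ ^ 2 = -(N * ‖y‖ ^ 2) / 2 from by ring]
    ring
  rw [← ofReal_integral_eq_lintegral_ofReal hint
    (Filter.Eventually.of_forall fun y => by positivity)]
  have hi : ∫ y : ℂ, L' * ‖y‖ * (N * Real.exp (-(N * ‖y‖ ^ 2) / 2))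
      = L' * N * (π * Real.sqrt 2 * Real.sqrt π / Real.sqrt N ^ 3) := by
    rw [← gauss_moment N hN, ← integral_const_mul]
    congr 1; funext y; ring
  rw [hi, smul_eq_mul, ← ENNReal.ofReal_mul (by positivity)]
  congr 1
  have hsN : 0 < Real.sqrt N := Real.sqrt_pos.mpr hN
  have hNs : Real.sqrt N ^ 2 = N := Real.sq_sqrt hN.le
  have hπ : (0:ℝ) < π := Real.pi_pos
  rw [show Real.sqrt N ^ 3 = N * Real.sqrt N from by rw [pow_succ, hNs]]
  field_simp

lemma schurH_row (N : ℝ) (L' : ℝ) (hN : 0 < N) (hL : 0 ≤ L') (x : ℂ) :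
    ∫⁻ z, schurH N L' x z ∂gammaMeasure
      = ENNReal.ofReal (Real.sqrt 2 * Real.sqrt π * (Real.sqrt N)⁻¹ * L') := by
  unfold schurH
  simp_rw [norm_sub_rev x]
  exact row_integral N L' hN hL x

lemma schurH_col (N : ℝ) (L' : ℝ) (hN : 0 < N) (hL : 0 ≤ L') (z : ℂ) :
    ∫⁻ x, schurH N L' x z ∂gammaMeasure
      = ENNReal.ofReal (Real.sqrt 2 * Real.sqrt π * (Real.sqrt N)⁻¹ * L') := by
  unfold schurH
  exact row_integral N L' hN hL z

lemma measurable_schurH (N L' : ℝ) :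
    Measurable (fun p : ℂ × ℂ => schurH N L' p.1 p.2) := by
  unfold schurH
  apply Measurable.ennreal_ofReal
  apply Continuous.measurable
  continuity

lemma measurable_schurH_left (N L' : ℝ) (x : ℂ) :
    Measurable (fun z => schurH N L' x z) := by
  unfold schurH
  apply Measurable.ennreal_ofReal
  apply Continuous.measurable
  continuity

lemma e1_rpow (h : ℝ≥0∞) : (h ^ ((1:ℝ)/2)) ^ (2:ℝ) = h := by
  rw [← ENNReal.rpow_mul]
  norm_num

lemma pointwise_bound (N : ℝ) (hN : 0 < N) (g : ℂ → ℝ) (L : ℝ≥0)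
    (hg : LipschitzWith L g) (v : ℂ → ℂ) (hv : MemLp v 2 gammaMeasure) (x : ℂ) :
    (‖(∫ z : ℂ, bargmannKernel N x z * ((g z : ℂ) * v z) ∂gammaMeasure)
        - (g x : ℂ) * ∫ z : ℂ, bargmannKernel N x z * v z ∂gammaMeasure‖₊ : ℝ≥0∞)
      ≤ ∫⁻ z, schurH N (L : ℝ) x z * (‖v z‖₊ : ℝ≥0∞) ∂gammaMeasure := by
  have i1 := integrable_kernel_mul N hN x v hv
  have i2 := integrable_kernel_mul_g N hN x g L hg v hv
  have hsub : (∫ z : ℂ, bargmannKernel N x z * ((g z : ℂ) * v z) ∂gammaMeasure)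
        - (g x : ℂ) * ∫ z : ℂ, bargmannKernel N x z * v z ∂gammaMeasure
      = ∫ z : ℂ, ((g z : ℂ) - (g x : ℂ)) * (bargmannKernel N x z * v z) ∂gammaMeasure := by
    rw [← integral_const_mul, ← integral_sub i2 (i1.const_mul _)]
    congr 1; funext z; ring
  rw [hsub]
  calc (‖∫ z : ℂ, ((g z : ℂ) - (g x : ℂ)) * (bargmannKernel N x z * v z) ∂gammaMeasure‖₊ : ℝ≥0∞)
      ≤ ∫⁻ z, (‖((g z : ℂ) - (g x : ℂ)) * (bargmannKernel N x z * v z)‖₊ : ℝ≥0∞) ∂gammaMeasure :=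
        enorm_integral_le_lintegral_enorm _
    _ ≤ ∫⁻ z, schurH N (L : ℝ) x z * (‖v z‖₊ : ℝ≥0∞) ∂gammaMeasure := by
        refine lintegral_mono fun z => ?_
        rw [← enorm_eq_nnnorm, ← enorm_eq_nnnorm, ← ofReal_norm, ← ofReal_norm]
        unfold schurH
        rw [← ENNReal.ofReal_mul (by positivity)]
        refine ENNReal.ofReal_le_ofReal ?_
        rw [norm_mul, norm_mul]
        have h1 : ‖(g z : ℂ) - (g x : ℂ)‖ ≤ (L : ℝ) * ‖x - z‖ := by
          rw [← Complex.ofReal_sub, Complex.norm_real, Real.norm_eq_abs]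
          have h0 := hg.dist_le_mul z x
          rw [Real.dist_eq, dist_eq_norm, norm_sub_rev] at h0
          exact h0
        calc ‖(g z : ℂ) - (g x : ℂ)‖ * (‖bargmannKernel N x z‖ * ‖v z‖)
            ≤ ((L : ℝ) * ‖x - z‖) * ((N * Real.exp (-(N * ‖x - z‖ ^ 2) / 2)) * ‖v z‖) := by
              rw [norm_bargmannKernel N hN.le]
              exact mul_le_mul h1 le_rfl (by positivity) (by positivity)
          _ = (L : ℝ) * ‖x - z‖ * (N * Real.exp (-(N * ‖x - z‖ ^ 2) / 2)) * ‖v z‖ := by ring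

lemma schur_CS (N L' : ℝ) (v : ℂ → ℂ) (hvm : Measurable v) (x : ℂ) :
    ∫⁻ z, schurH N L' x z * (‖v z‖₊ : ℝ≥0∞) ∂gammaMeasure
      ≤ (∫⁻ z, schurH N L' x z ∂gammaMeasure) ^ ((1:ℝ)/2)
        * (∫⁻ z, schurH N L' x z * (‖v z‖₊ : ℝ≥0∞) ^ (2:ℝ) ∂gammaMeasure) ^ ((1:ℝ)/2) := by
  have hconj : Real.HolderConjugate 2 2 := Real.holderConjugate_iff.mpr ⟨by norm_num, by norm_num⟩
  have hHm := measurable_schurH_left N L' x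
  have hrm : Measurable fun y : ℝ≥0∞ => y ^ ((1:ℝ)/2) := by fun_prop
  have hfm : Measurable fun z => (schurH N L' x z) ^ ((1:ℝ)/2) := hrm.comp hHm
  have hgm : Measurable fun z => (schurH N L' x z) ^ ((1:ℝ)/2) * (‖v z‖₊ : ℝ≥0∞) :=
    hfm.mul hvm.enorm
  have key := ENNReal.lintegral_mul_le_Lp_mul_Lq gammaMeasure hconj
    hfm.aemeasurable hgm.aemeasurable
  have lhs_eq : ∫⁻ z, ((fun z => (schurH N L' x z) ^ ((1:ℝ)/2))
      * fun z => (schurH N L' x z) ^ ((1:ℝ)/2) * (‖v z‖₊ : ℝ≥0∞)) z ∂gammaMeasure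
      = ∫⁻ z, schurH N L' x z * (‖v z‖₊ : ℝ≥0∞) ∂gammaMeasure := by
    refine lintegral_congr fun z => ?_
    simp only [Pi.mul_apply]
    rw [← mul_assoc, ← ENNReal.rpow_add_of_nonneg _ _ (by norm_num) (by norm_num)]
    norm_num
  rw [lhs_eq] at key
  have hf2 : ∫⁻ z, ((schurH N L' x z) ^ ((1:ℝ)/2)) ^ (2:ℝ) ∂gammaMeasure
      = ∫⁻ z, schurH N L' x z ∂gammaMeasure :=
    lintegral_congr fun z => e1_rpow _
  have hg2 : ∫⁻ z, ((schurH N L' x z) ^ ((1:ℝ)/2) * (‖v z‖₊ : ℝ≥0∞)) ^ (2:ℝ) ∂gammaMeasure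
      = ∫⁻ z, schurH N L' x z * (‖v z‖₊ : ℝ≥0∞) ^ (2:ℝ) ∂gammaMeasure :=
    lintegral_congr fun z => by
      rw [ENNReal.mul_rpow_of_nonneg _ _ (by norm_num : (0:ℝ) ≤ 2), e1_rpow]
  rw [hf2, hg2] at key
  exact key

/-- For the Bargmann projection `P_N` and a Lipschitz function `g : ℂ → ℝ`
(as a multiplication operator), `‖[P_N, g]‖ ≤ C N^{-1/2} Lip(g)` with
`C = ∫₀^∞ √t e^{-t/2} dt`; the operator norm bound is expressed by the `L²` bound
`‖P_N(g u) − g P_N u‖_{L²(γ)} ≤ C N^{-1/2} Lip(g) ‖u‖_{L²(γ)}` for every `u ∈ L²(γ)`. -/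
theorem bargmann_commutator_bound (N : ℝ) (hN : 0 < N)
    (g : ℂ → ℝ) (L : ℝ≥0) (hg : LipschitzWith L g)
    (u : ℂ → ℂ) (hu : MemLp u 2 gammaMeasure) :
    eLpNorm (fun x : ℂ =>
        (∫ z : ℂ, bargmannKernel N x z * ((g z : ℂ) * u z) ∂gammaMeasure)
          - (g x : ℂ) * ∫ z : ℂ, bargmannKernel N x z * u z ∂gammaMeasure) 2 gammaMeasure
      ≤ ENNReal.ofReal
          ((∫ t in Set.Ioi (0 : ℝ), Real.sqrt t * Real.exp (-t / 2)) * (Real.sqrt N)⁻¹ * (L : ℝ))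
        * eLpNorm u 2 gammaMeasure := by
  classical
  obtain ⟨v, hvsm, huv⟩ := hu.aestronglyMeasurable
  have hv : MemLp v 2 gammaMeasure := hu.ae_eq huv
  have hvm : Measurable v := hvsm.measurable
  have hFeq : (fun x : ℂ =>
        (∫ z : ℂ, bargmannKernel N x z * ((g z : ℂ) * u z) ∂gammaMeasure)
          - (g x : ℂ) * ∫ z : ℂ, bargmannKernel N x z * u z ∂gammaMeasure)
      = (fun x : ℂ =>
        (∫ z : ℂ, bargmannKernel N x z * ((g z : ℂ) * v z) ∂gammaMeasure)
          - (g x : ℂ) * ∫ z : ℂ, bargmannKernel N x z * v z ∂gammaMeasure) := by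
    funext x
    have e1 : (fun z : ℂ => bargmannKernel N x z * ((g z : ℂ) * u z))
        =ᶠ[ae gammaMeasure] fun z : ℂ => bargmannKernel N x z * ((g z : ℂ) * v z) :=
      huv.mono fun z hz => by dsimp only; rw [hz]
    have e2 : (fun z : ℂ => bargmannKernel N x z * u z)
        =ᶠ[ae gammaMeasure] fun z : ℂ => bargmannKernel N x z * v z :=
      huv.mono fun z hz => by dsimp only; rw [hz]
    rw [integral_congr_ae e1, integral_congr_ae e2]
  rw [hFeq, eLpNorm_congr_ae huv, C_val]
  set A : ℝ := Real.sqrt 2 * Real.sqrt Real.pi * (Real.sqrt N)⁻¹ * (L : ℝ) with hA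
  have hrow := schurH_row N (L : ℝ) hN L.coe_nonneg
  have hcol := schurH_col N (L : ℝ) hN L.coe_nonneg
  -- combined pointwise bound, squared
  have hsq : ∀ x : ℂ,
      ((‖(∫ z : ℂ, bargmannKernel N x z * ((g z : ℂ) * v z) ∂gammaMeasure)
        - (g x : ℂ) * ∫ z : ℂ, bargmannKernel N x z * v z ∂gammaMeasure‖₊ : ℝ≥0∞)) ^ (2:ℝ)
      ≤ ENNReal.ofReal A * ∫⁻ z, schurH N (L : ℝ) x z * (‖v z‖₊ : ℝ≥0∞) ^ (2:ℝ) ∂gammaMeasure := by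
    intro x
    have h := (pointwise_bound N hN g L hg v hv x).trans (schur_CS N (L : ℝ) v hvm x)
    rw [hrow x] at h
    have h2 := ENNReal.rpow_le_rpow h (by norm_num : (0:ℝ) ≤ 2)
    rwa [ENNReal.mul_rpow_of_nonneg _ _ (by norm_num : (0:ℝ) ≤ 2), e1_rpow, e1_rpow] at h2
  -- measurability for Tonelli
  have hswapm : AEMeasurable (Function.uncurry fun x z =>
      schurH N (L : ℝ) x z * (‖v z‖₊ : ℝ≥0∞) ^ (2:ℝ)) (gammaMeasure.prod gammaMeasure) := by
    have hrm : Measurable fun y : ℝ≥0∞ => y ^ (2:ℝ) := by fun_prop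
    exact ((measurable_schurH N (L : ℝ)).mul
      (hrm.comp ((hvm.comp measurable_snd).enorm))).aemeasurable
  have hne : ∀ z : ℂ, (‖v z‖₊ : ℝ≥0∞) ^ (2:ℝ) ≠ ⊤ :=
    fun z => (ENNReal.rpow_lt_top_of_nonneg (by norm_num) ENNReal.coe_ne_top).ne
  -- eLpNorm of the commutator
  have htwo : ((2 : ℝ≥0∞)).toReal = (2:ℝ) := by norm_num
  rw [eLpNorm_eq_lintegral_rpow_enorm_toReal (by norm_num) (by norm_num),
    eLpNorm_eq_lintegral_rpow_enorm_toReal (p := 2) (μ := gammaMeasure) (f := v) (by norm_num)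
      (by norm_num), htwo]
  calc (∫⁻ x, (‖(∫ z : ℂ, bargmannKernel N x z * ((g z : ℂ) * v z) ∂gammaMeasure)
        - (g x : ℂ) * ∫ z : ℂ, bargmannKernel N x z * v z ∂gammaMeasure‖₊ : ℝ≥0∞) ^ (2:ℝ)
          ∂gammaMeasure) ^ ((1:ℝ)/(2:ℝ))
      ≤ (∫⁻ x, ENNReal.ofReal A
            * ∫⁻ z, schurH N (L : ℝ) x z * (‖v z‖₊ : ℝ≥0∞) ^ (2:ℝ) ∂gammaMeasure ∂gammaMeasure)
          ^ ((1:ℝ)/(2:ℝ)) :=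
        ENNReal.rpow_le_rpow (lintegral_mono hsq) (by norm_num)
    _ = (ENNReal.ofReal A * ∫⁻ x, ∫⁻ z, schurH N (L : ℝ) x z * (‖v z‖₊ : ℝ≥0∞) ^ (2:ℝ)
            ∂gammaMeasure ∂gammaMeasure) ^ ((1:ℝ)/(2:ℝ)) := by
        rw [lintegral_const_mul' _ _ ENNReal.ofReal_ne_top]
    _ = (ENNReal.ofReal A * ∫⁻ z, ∫⁻ x, schurH N (L : ℝ) x z * (‖v z‖₊ : ℝ≥0∞) ^ (2:ℝ)
            ∂gammaMeasure ∂gammaMeasure) ^ ((1:ℝ)/(2:ℝ)) := by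
        rw [lintegral_lintegral_swap hswapm]
    _ = (ENNReal.ofReal A * (ENNReal.ofReal A
            * ∫⁻ z, (‖v z‖₊ : ℝ≥0∞) ^ (2:ℝ) ∂gammaMeasure)) ^ ((1:ℝ)/(2:ℝ)) := by
        congr 2
        have : ∀ z : ℂ, ∫⁻ x, schurH N (L : ℝ) x z * (‖v z‖₊ : ℝ≥0∞) ^ (2:ℝ) ∂gammaMeasure
            = ENNReal.ofReal A * (‖v z‖₊ : ℝ≥0∞) ^ (2:ℝ) := by
          intro z
          rw [lintegral_mul_const' _ _ (hne z), hcol z]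
        rw [lintegral_congr this, lintegral_const_mul' _ _ ENNReal.ofReal_ne_top]
    _ = ENNReal.ofReal A * (∫⁻ z, (‖v z‖₊ : ℝ≥0∞) ^ (2:ℝ) ∂gammaMeasure) ^ ((1:ℝ)/(2:ℝ)) := by
        rw [← mul_assoc, ENNReal.mul_rpow_of_nonneg _ _ (by norm_num : (0:ℝ) ≤ 1/2)]
        congr 1
        rw [show ENNReal.ofReal A * ENNReal.ofReal A
            = (ENNReal.ofReal A) ^ ((2:ℕ):ℝ) from ?_]
        · rw [← ENNReal.rpow_mul]
          norm_num
        · rw [ENNReal.rpow_natCast, sq]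
end Aux
end
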